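/- arXiv:2105.04146 — 2 statements merged into one kernel-verified Lean document; each statement's English description precedes it below -/
import Mathlib

section
/- Let M be a maximal matching of a simple graph G, let e ∉ M, let F = M ∩ Γ(e) (so |F| ≤ 2), and let M' = complete((M \ F) ∪ {e}). Then every edge of M' \ ((M \ F) ∪ {e}) is adjacent to some edge of F; consequently |M' \ ((M \ F) ∪ {e})| ≤ 2 and |M △ M'| ≤ 5. -/
open SimpleGraph

variable {V : Type*}

def IsMatchingF (G : SimpleGraph V) (M : Finset (Sym2 V)) : Prop :=
  (∀ e ∈ M, e ∈ G.edgeSet) ∧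
    ∀ e ∈ M, ∀ f ∈ M, e ≠ f → ∀ v : V, v ∈ e → v ∉ f

def IsMaximalMatchingF [DecidableEq V] (G : SimpleGraph V) (M : Finset (Sym2 V)) : Prop :=
  IsMatchingF G M ∧ ∀ e ∈ G.edgeSet, e ∉ M → ¬ IsMatchingF G (insert e M)

/-- `v` is unmatched by the matching `M`. -/
def Unmatched (M : Finset (Sym2 V)) (v : V) : Prop := ∀ e ∈ M, v ∉ e

/-- The graph `G[M₁ △ M₂]` on the symmetric difference of two edge sets. -/
def sdGraph [DecidableEq V] (M₁ M₂ : Finset (Sym2 V)) : SimpleGraph V where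
  Adj v w := v ≠ w ∧ s(v, w) ∈ (M₁ \ M₂) ∪ (M₂ \ M₁)
  symm := by
    refine ⟨?_⟩
    intro v w h
    exact ⟨h.1.symm, by rw [Sym2.eq_swap]; exact h.2⟩
  loopless := ⟨fun v h => h.1 rfl⟩

/-- The walk `p` is a path which is exactly a connected component of `H`
(it spans the component and uses all of its edges, and has at least one edge). -/
def IsPathComponent [DecidableEq V] (H : SimpleGraph V) {u w : V} (p : H.Walk u w) : Prop :=
  p.IsPath ∧ 1 ≤ p.length ∧
    (∀ x : V, x ∈ p.support ↔ H.connectedComponentMk x = H.connectedComponentMk u) ∧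
    (∀ a b : V, H.Adj a b → a ∈ p.support → s(a, b) ∈ p.edges)

/-- The closed walk `p` is a cycle which is exactly a connected component of `H`. -/
def IsCycleComponent [DecidableEq V] (H : SimpleGraph V) {u : V} (p : H.Walk u u) : Prop :=
  p.IsCycle ∧
    (∀ x : V, x ∈ p.support ↔ H.connectedComponentMk x = H.connectedComponentMk u) ∧
    (∀ a b : V, H.Adj a b → a ∈ p.support → s(a, b) ∈ p.edges)

/-- `M` minus all edges sharing an endpoint with `e` (i.e. `M \ Γ(e)` for `e ∉ M`). -/
def removeAdj [Fintype V] [DecidableEq V] (M : Finset (Sym2 V)) (e : Sym2 V) :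
    Finset (Sym2 V) :=
  M.filter fun f => ¬ ∃ v : V, v ∈ e ∧ v ∈ f

/-- `comp` greedily extends any matching of `G` to a maximal matching containing it. -/
def CompletionFun [DecidableEq V] (G : SimpleGraph V)
    (comp : Finset (Sym2 V) → Finset (Sym2 V)) : Prop :=
  ∀ M : Finset (Sym2 V), IsMatchingF G M → M ⊆ comp M ∧ IsMaximalMatchingF G (comp M)

/-- The arcs of the solution graph 𝒢: from `M` to `comp((M \ Γ(e)) ∪ {e})` for `e ∉ M`. -/
def GStep [Fintype V] [DecidableEq V] (G : SimpleGraph V)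
    (comp : Finset (Sym2 V) → Finset (Sym2 V)) (M M' : Finset (Sym2 V)) : Prop :=
  ∃ e ∈ G.edgeSet, e ∉ M ∧ M' = comp (insert e (removeAdj M e))

theorem stmt16 [Fintype V] [DecidableEq V] (G : SimpleGraph V)
    (M M' F : Finset (Sym2 V)) (e : Sym2 V)
    (hM : IsMaximalMatchingF G M) (he : e ∈ G.edgeSet) (heM : e ∉ M)
    (hF : F = M.filter fun f => ∃ v : V, v ∈ e ∧ v ∈ f)
    (hM' : IsMaximalMatchingF G M') (hsub : insert e (M \ F) ⊆ M') :
    (∀ f ∈ M' \ insert e (M \ F), ∃ f' ∈ F, ∃ v : V, v ∈ f ∧ v ∈ f') ∧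
      (M' \ insert e (M \ F)).card ≤ 2 ∧ (symmDiff M M').card ≤ 5 := by
  obtain ⟨⟨hMe, hMd⟩, hMmax⟩ := hM
  obtain ⟨⟨hM'e, hM'd⟩, -⟩ := hM'
  have heM' : e ∈ M' := hsub (Finset.mem_insert_self e _)
  have hMF : M \ F ⊆ M' := fun f hf => hsub (Finset.mem_insert_of_mem hf)
  have hFM : F ⊆ M := by rw [hF]; exact Finset.filter_subset _ _
  obtain ⟨a, b, hab⟩ : ∃ a b, e = s(a, b) := by
    induction e using Sym2.ind with | _ x y => exact ⟨x, y, rfl⟩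
  have part1 : ∀ f ∈ M' \ insert e (M \ F), ∃ f' ∈ F, ∃ v : V, v ∈ f ∧ v ∈ f' := by
    intro f hf
    rw [Finset.mem_sdiff, Finset.mem_insert] at hf
    obtain ⟨hfM', hfni⟩ := hf
    push_neg at hfni
    obtain ⟨hfe, hfMF⟩ := hfni
    have hfnM : f ∉ M := by
      intro hfM
      by_cases hfF : f ∈ F
      · rw [hF, Finset.mem_filter] at hfF
        obtain ⟨-, v, hve, hvf⟩ := hfF
        exact hM'd e heM' f hfM' (Ne.symm hfe) v hve hvf
      · exact hfMF (Finset.mem_sdiff.mpr ⟨hfM, hfF⟩)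
    have hnot := hMmax f (hM'e f hfM') hfnM
    rw [IsMatchingF] at hnot
    push_neg at hnot
    have hall : ∀ g ∈ insert f M, g ∈ G.edgeSet := by
      intro g hg
      rcases Finset.mem_insert.mp hg with rfl | hg
      · exact hM'e g hfM'
      · exact hMe g hg
    obtain ⟨g1, hg1, g2, hg2, hne, v, hv1, hv2⟩ := hnot hall
    have key : ∀ g ∈ M, ∀ w : V, w ∈ f → w ∈ g → ∃ f' ∈ F, ∃ v : V, v ∈ f ∧ v ∈ f' := by
      intro g hgM w hwf hwg
      refine ⟨g, ?_, w, hwf, hwg⟩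
      by_contra hgF
      have hgM' : g ∈ M' := hMF (Finset.mem_sdiff.mpr ⟨hgM, hgF⟩)
      refine hM'd f hfM' g hgM' ?_ w hwf hwg
      rintro rfl; exact hfnM hgM
    rcases Finset.mem_insert.mp hg1 with rfl | hg1M
    · rcases Finset.mem_insert.mp hg2 with rfl | hg2M
      · exact absurd rfl hne
      · exact key g2 hg2M v hv1 hv2
    · rcases Finset.mem_insert.mp hg2 with rfl | hg2M
      · exact key g1 hg1M v hv2 hv1
      · exact absurd hv2 (hMd g1 hg1M g2 hg2M hne v hv1)
  have hvF : ∀ f ∈ F, (if a ∈ f then a else b) ∈ f := by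
    intro f hfF
    rw [hF, Finset.mem_filter] at hfF
    obtain ⟨-, v, hve, hvf⟩ := hfF
    rw [hab, Sym2.mem_iff] at hve
    by_cases h : a ∈ f
    · simp [h]
    · simp only [h, if_false]
      rcases hve with rfl | rfl
      · exact absurd hvf h
      · exact hvf
  have hcardF : F.card ≤ 2 := by
    have h1 : F.card ≤ ({a, b} : Finset V).card := by
      apply Finset.card_le_card_of_injOn (fun f => if a ∈ f then a else b)
      · intro f hfF
        by_cases h : a ∈ f <;> simp [h]
      · intro f1 h1 f2 h2 heq
        have heq' : (if a ∈ f1 then a else b) = (if a ∈ f2 then a else b) := heq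
        by_contra hne
        exact hMd f1 (hFM h1) f2 (hFM h2) hne _ (hvF f1 h1) (heq' ▸ hvF f2 h2)
    exact h1.trans (le_trans (Finset.card_insert_le _ _) (by simp))
  have part1' : ∀ f, ∃ p : Sym2 V × V, f ∈ M' \ insert e (M \ F) →
      p.1 ∈ F ∧ p.2 ∈ f ∧ p.2 ∈ p.1 := by
    intro f
    by_cases hf : f ∈ M' \ insert e (M \ F)
    · obtain ⟨f', hf', v, hvf, hvf'⟩ := part1 f hf
      exact ⟨(f', v), fun _ => ⟨hf', hvf, hvf'⟩⟩
    · exact ⟨(e, a), fun h => absurd h hf⟩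
  choose g hg using part1'
  have hnotine : ∀ f ∈ M' \ insert e (M \ F), ∀ v : V, v ∈ f → v ∉ e := by
    intro f hf v hvf
    rw [Finset.mem_sdiff, Finset.mem_insert] at hf
    push_neg at hf
    exact hM'd f hf.1 e heM' hf.2.1 v hvf
  have hcardD : (M' \ insert e (M \ F)).card ≤ F.card := by
    apply Finset.card_le_card_of_injOn (fun f => (g f).1)
    · intro f hf; exact (hg f hf).1
    · intro f1 h1 f2 h2 heq
      replace heq : (g f1).1 = (g f2).1 := heq
      simp only [Finset.mem_coe] at h1 h2
      obtain ⟨hF1, hv1f, hv1F⟩ := hg f1 h1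
      obtain ⟨hF2, hv2f, hv2F⟩ := hg f2 h2
      have hwex := hF1
      rw [hF, Finset.mem_filter] at hwex
      obtain ⟨-, w, hwe, hwf'⟩ := hwex
      have hv1w : (g f1).2 ≠ w := fun h => hnotine f1 h1 _ hv1f (h ▸ hwe)
      have hv2w : (g f2).2 ≠ w := fun h => hnotine f2 h2 _ hv2f (h ▸ hwe)
      have e1 : (g f1).1 = s((g f1).2, w) := ((Sym2.mem_and_mem_iff hv1w).mp ⟨hv1F, hwf'⟩)
      have e2 : (g f2).1 = s((g f2).2, w) := by
        refine (Sym2.mem_and_mem_iff hv2w).mp ⟨hv2F, ?_⟩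
        rw [← heq]; exact hwf'
      have : s((g f1).2, w) = s((g f2).2, w) := by rw [← e1, ← e2, heq]
      rw [Sym2.eq_iff] at this
      have hvv : (g f1).2 = (g f2).2 := by
        rcases this with ⟨h, -⟩ | ⟨h1', h2'⟩
        · exact h
        · exact absurd h1' hv1w
      by_contra hne
      have hf1M' : f1 ∈ M' := (Finset.mem_sdiff.mp h1).1
      have hf2M' : f2 ∈ M' := (Finset.mem_sdiff.mp h2).1
      exact hM'd f1 hf1M' f2 hf2M' hne _ hv1f (hvv ▸ hv2f)
  refine ⟨part1, hcardD.trans hcardF, ?_⟩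
  have hsub1 : M \ M' ⊆ F := by
    intro f hf
    rw [Finset.mem_sdiff] at hf
    by_contra hfF
    exact hf.2 (hMF (Finset.mem_sdiff.mpr ⟨hf.1, hfF⟩))
  have hsub2 : M' \ M ⊆ insert e (M' \ insert e (M \ F)) := by
    intro f hf
    rw [Finset.mem_sdiff] at hf
    by_cases hfi : f ∈ insert e (M \ F)
    · rcases Finset.mem_insert.mp hfi with rfl | hfm
      · exact Finset.mem_insert_self _ _
      · exact absurd (Finset.mem_sdiff.mp hfm).1 hf.2
    · exact Finset.mem_insert_of_mem (Finset.mem_sdiff.mpr ⟨hf.1, hfi⟩)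
  calc (symmDiff M M').card = ((M \ M') ∪ (M' \ M)).card := by
        rw [symmDiff_def, Finset.sup_eq_union]
    _ ≤ (M \ M').card + (M' \ M).card := Finset.card_union_le _ _
    _ ≤ 2 + 3 := by
        refine Nat.add_le_add ((Finset.card_le_card hsub1).trans hcardF) ?_
        refine (Finset.card_le_card hsub2).trans ?_
        refine (Finset.card_insert_le _ _).trans ?_
        exact Nat.add_le_add_right (hcardD.trans hcardF) 1
    _ ≤ 5 := by norm_num
end

section
/- Let G be a graph with 2n ≥ 4 vertices obtained from the complete graph K_{2n} by attaching one pendant vertex to each vertex of K_{2n}. Then G has exactly one maximal matching of cardinality 2n (namely the set of all pendant edges), while the number of maximal matchings of G is at least (2n)!/(2ⁿ · n!), the number of perfect matchings of K_{2n}. -/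
open SimpleGraph

variable {V : Type*}

/-- The complete graph `K_{2n}` (the `Sum.inl` vertices) with a pendant vertex
(`Sum.inr a`) attached to each clique vertex (`Sum.inl a`). -/
def pendGraph (n : ℕ) : SimpleGraph (Fin (2 * n) ⊕ Fin (2 * n)) :=
  SimpleGraph.fromRel (fun x y =>
    match x, y with
    | Sum.inl _, Sum.inl _ => True
    | Sum.inl a, Sum.inr b => a = b
    | _, _ => False)

lemma maximal_of_cover [DecidableEq V] {G : SimpleGraph V} {M : Finset (Sym2 V)}
    (hM : IsMatchingF G M)
    (h : ∀ x y : V, G.Adj x y → ∃ f ∈ M, x ∈ f ∨ y ∈ f) :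
    IsMaximalMatchingF G M := by
  refine ⟨hM, fun e he heM => ?_⟩
  revert he heM
  induction e using Sym2.ind with
  | _ x y =>
    intro he heM hins
    obtain ⟨f, hf, hxy⟩ := h x y (G.mem_edgeSet.mp he)
    have hef : s(x, y) ≠ f := fun hh => heM (hh ▸ hf)
    cases hxy with
    | inl hx =>
      exact hins.2 _ (Finset.mem_insert_self _ _) f (Finset.mem_insert_of_mem hf) hef x (by simp) hx
    | inr hy =>
      exact hins.2 _ (Finset.mem_insert_self _ _) f (Finset.mem_insert_of_mem hf) hef y (by simp) hy

namespace Stmt19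

lemma adj_ll {n : ℕ} {a b : Fin (2*n)} :
    (pendGraph n).Adj (Sum.inl a) (Sum.inl b) ↔ a ≠ b := by
  simp [pendGraph, SimpleGraph.fromRel_adj]

lemma adj_lr {n : ℕ} {a b : Fin (2*n)} :
    (pendGraph n).Adj (Sum.inl a) (Sum.inr b) ↔ a = b := by
  simp [pendGraph, SimpleGraph.fromRel_adj]

lemma not_adj_rr {n : ℕ} {a b : Fin (2*n)} : ¬ (pendGraph n).Adj (Sum.inr a) (Sum.inr b) := by
  simp [pendGraph, SimpleGraph.fromRel_adj]

/-- the pendant matching -/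
noncomputable abbrev pendM (n : ℕ) : Finset (Sym2 (Fin (2*n) ⊕ Fin (2*n))) :=
  Finset.univ.image fun a : Fin (2 * n) => s(Sum.inl a, Sum.inr a)

lemma mem_pendM {n : ℕ} {e : Sym2 (Fin (2*n) ⊕ Fin (2*n))} :
    e ∈ pendM n ↔ ∃ a, s(Sum.inl a, Sum.inr a) = e := by
  simp [pendM]

lemma pendM_matching (n : ℕ) : IsMatchingF (pendGraph n) (pendM n) := by
  constructor
  · intro e he
    obtain ⟨a, rfl⟩ := mem_pendM.mp he
    exact (pendGraph n).mem_edgeSet.mpr (adj_lr.mpr rfl)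
  · intro e he f hf hef v hve hvf
    obtain ⟨a, rfl⟩ := mem_pendM.mp he
    obtain ⟨b, rfl⟩ := mem_pendM.mp hf
    have hab : a ≠ b := fun h => hef (by rw [h])
    rw [Sym2.mem_iff] at hve hvf
    rcases hve with rfl | rfl <;> rcases hvf with h | h <;> simp_all

lemma pendM_maximal (n : ℕ) : IsMaximalMatchingF (pendGraph n) (pendM n) := by
  refine maximal_of_cover (pendM_matching n) ?_
  intro x y hxy
  cases x with
  | inl a => exact ⟨s(Sum.inl a, Sum.inr a), mem_pendM.mpr ⟨a, rfl⟩, Or.inl (by simp)⟩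
  | inr a => exact ⟨s(Sum.inl a, Sum.inr a), mem_pendM.mpr ⟨a, rfl⟩, Or.inl (by simp)⟩

lemma pendM_card (n : ℕ) : (pendM n).card = 2 * n := by
  rw [Finset.card_image_of_injective _ ?_, Finset.card_univ, Fintype.card_fin]
  intro a b h
  simp [Sym2.eq_iff] at h
  exact h

/-- vertex set of an edge -/
def vtx [DecidableEq V] (e : Sym2 V) : Finset V :=
  Sym2.lift ⟨fun x y => {x, y}, fun x y => Finset.pair_comm x y⟩ e

lemma mem_vtx [DecidableEq V] {e : Sym2 V} {v : V} : v ∈ vtx e ↔ v ∈ e := by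
  induction e using Sym2.ind with
  | _ x y => simp [vtx, Sym2.mem_iff]

lemma card_vtx [DecidableEq V] {e : Sym2 V} (h : ¬ e.IsDiag) : (vtx e).card = 2 := by
  induction e using Sym2.ind with
  | _ x y =>
    rw [Sym2.mk_isDiag_iff] at h
    exact Finset.card_pair h

end Stmt19

namespace Stmt19

lemma uniq (n : ℕ) (M : Finset (Sym2 (Fin (2*n) ⊕ Fin (2*n))))
    (hM : IsMaximalMatchingF (pendGraph n) M) (hcard : M.card = 2 * n) :
    M = pendM n := by
  classical
  obtain ⟨⟨hedge, hdisj⟩, -⟩ := hM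
  -- the set of covered vertices is everything
  have hdis : ∀ e ∈ M, ∀ f ∈ M, e ≠ f → Disjoint (vtx e) (vtx f) := by
    intro e he f hf hef
    rw [Finset.disjoint_left]
    intro v hv
    rw [mem_vtx] at hv ⊢
    exact hdisj e he f hf hef v hv
  have hcover : M.biUnion vtx = Finset.univ := by
    apply Finset.eq_univ_of_card
    rw [Finset.card_biUnion hdis]
    have : ∀ e ∈ M, (vtx e).card = 2 := fun e he =>
      card_vtx ((pendGraph n).not_isDiag_of_mem_edgeSet (hedge e he))
    rw [Finset.sum_congr rfl this, Finset.sum_const, hcard]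
    simp [Fintype.card_sum]
    ring
  -- every pendant edge is in M
  have hsub : pendM n ⊆ M := by
    intro e he
    obtain ⟨a, rfl⟩ := mem_pendM.mp he
    have : (Sum.inr a : Fin (2*n) ⊕ Fin (2*n)) ∈ M.biUnion vtx := by
      rw [hcover]; exact Finset.mem_univ _
    obtain ⟨f, hf, hvf⟩ := Finset.mem_biUnion.mp this
    rw [mem_vtx] at hvf
    suffices h : f = s(Sum.inl a, Sum.inr a) by rwa [h] at hf
    have hfe := hedge f hf
    revert hvf hfe
    clear hf
    induction f using Sym2.ind with
    | _ x y =>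
      intro hvf hfe
      have hadj := (pendGraph n).mem_edgeSet.mp hfe
      rw [Sym2.mem_iff] at hvf
      rcases hvf with rfl | rfl
      · cases y with
        | inl b =>
          have := adj_lr.mp hadj.symm  -- Adj (inl b) (inr a) : b = a
          rw [this, Sym2.eq_swap]
        | inr b => exact absurd hadj not_adj_rr
      · cases x with
        | inl b =>
          have := adj_lr.mp hadj
          rw [this]
        | inr b => exact absurd hadj not_adj_rr
  exact (Finset.eq_of_subset_of_card_le hsub (by rw [hcard, pendM_card])).symm

end Stmt19

namespace Stmt19

variable {n : ℕ}

/-- matching from a labelling of `Fin (2n)` by pairs -/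
def cliqueM (n : ℕ) (σ : Fin n × Bool ≃ Fin (2*n)) : Finset (Sym2 (Fin (2*n) ⊕ Fin (2*n))) :=
  Finset.univ.image fun i : Fin n => s(Sum.inl (σ (i, false)), Sum.inl (σ (i, true)))

lemma mem_cliqueM {σ : Fin n × Bool ≃ Fin (2*n)} {e : Sym2 (Fin (2*n) ⊕ Fin (2*n))} :
    e ∈ cliqueM n σ ↔ ∃ i, s(Sum.inl (σ (i, false)), Sum.inl (σ (i, true))) = e := by
  simp [cliqueM]

lemma cliqueM_maximal (σ : Fin n × Bool ≃ Fin (2*n)) :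
    IsMaximalMatchingF (pendGraph n) (cliqueM n σ) := by
  have hmem : ∀ a : Fin (2*n), ∃ f ∈ cliqueM n σ, (Sum.inl a : Fin (2*n) ⊕ Fin (2*n)) ∈ f := by
    intro a
    rcases hp : σ.symm a with ⟨j, b⟩
    have ha : σ (j, b) = a := by rw [← hp, Equiv.apply_symm_apply]
    refine ⟨s(Sum.inl (σ (j, false)), Sum.inl (σ (j, true))), mem_cliqueM.mpr ⟨j, rfl⟩, ?_⟩
    rw [Sym2.mem_iff]
    cases b with
    | false => left; rw [← ha]
    | true => right; rw [← ha]
  have hmatch : IsMatchingF (pendGraph n) (cliqueM n σ) := by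
    constructor
    · intro e he
      obtain ⟨i, rfl⟩ := mem_cliqueM.mp he
      refine (pendGraph n).mem_edgeSet.mpr (adj_ll.mpr fun h => ?_)
      have := σ.injective h
      simp at this
    · intro e he f hf hef v hve hvf
      obtain ⟨i, rfl⟩ := mem_cliqueM.mp he
      obtain ⟨j, rfl⟩ := mem_cliqueM.mp hf
      have hij : i ≠ j := fun h => hef (by rw [h])
      rw [Sym2.mem_iff] at hve hvf
      rcases hve with rfl | rfl <;> rcases hvf with h | h <;>
        · have := σ.injective (Sum.inl.inj h)
          simp_all
  refine maximal_of_cover hmatch ?_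
  intro x y hxy
  cases x with
  | inl a =>
    obtain ⟨f, hf, hvf⟩ := hmem a
    exact ⟨f, hf, Or.inl hvf⟩
  | inr a =>
    cases y with
    | inl b =>
      obtain ⟨f, hf, hvf⟩ := hmem b
      exact ⟨f, hf, Or.inr hvf⟩
    | inr b => exact absurd hxy not_adj_rr

/-- key reconstruction lemma -/
lemma key {σ σ₀ : Fin n × Bool ≃ Fin (2*n)} (h : cliqueM n σ = cliqueM n σ₀) (i : Fin n)
    (b : Bool) :
    σ (i, b) = σ₀ ((σ₀.symm (σ (i, false))).1, xor b (σ₀.symm (σ (i, false))).2) := by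
  have hmem : s(Sum.inl (σ (i, false)), Sum.inl (σ (i, true))) ∈ cliqueM n σ₀ := by
    rw [← h]; exact mem_cliqueM.mpr ⟨i, rfl⟩
  obtain ⟨j, hj⟩ := mem_cliqueM.mp hmem
  simp only [Sym2.eq_iff, Sum.inl.injEq] at hj
  rcases hj with ⟨h1, h2⟩ | ⟨h1, h2⟩
  · have hs : σ₀.symm (σ (i, false)) = (j, false) := by rw [← h1, Equiv.symm_apply_apply]
    rw [hs]
    cases b with
    | false => simpa using h1.symm
    | true => simpa using h2.symm
  · have hs : σ₀.symm (σ (i, false)) = (j, true) := by rw [← h2, Equiv.symm_apply_apply]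
    rw [hs]
    cases b with
    | false => simpa using h2.symm
    | true => simpa using h1.symm

lemma inj1 {σ σ₀ : Fin n × Bool ≃ Fin (2*n)} (h : cliqueM n σ = cliqueM n σ₀) :
    Function.Injective fun i : Fin n => (σ₀.symm (σ (i, false))).1 := by
  intro i i' h1
  simp only at h1
  by_cases hb : (σ₀.symm (σ (i, false))).2 = (σ₀.symm (σ (i', false))).2
  · have hpp : σ₀.symm (σ (i, false)) = σ₀.symm (σ (i', false)) := Prod.ext h1 hb
    have := σ.injective (σ₀.symm.injective hpp)
    exact (Prod.mk.injEq _ _ _ _ ▸ this).1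
  · have hb' : (σ₀.symm (σ (i', false))).2 = ! (σ₀.symm (σ (i, false))).2 :=
      Bool.eq_not_of_ne fun hh => hb hh.symm
    have hkey := key h i false
    have hkey' := key h i' true
    rw [hb', h1.symm, Bool.true_xor, Bool.not_not] at hkey'
    rw [Bool.false_xor] at hkey
    have : σ (i, false) = σ (i', true) := by rw [hkey, hkey']
    have := σ.injective this
    simp at this

lemma recon {σ σ' σ₀ : Fin n × Bool ≃ Fin (2*n)}
    (h : cliqueM n σ = cliqueM n σ₀) (h' : cliqueM n σ' = cliqueM n σ₀)
    (hp : ∀ i, σ₀.symm (σ (i, false)) = σ₀.symm (σ' (i, false))) : σ = σ' := by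
  apply Equiv.ext
  rintro ⟨i, b⟩
  rw [key h i b, key h' i b, hp i]

lemma fiber_card (σ₀ : Fin n × Bool ≃ Fin (2*n)) :
    ((Finset.univ : Finset (Fin n × Bool ≃ Fin (2*n))).filter
      fun σ => cliqueM n σ = cliqueM n σ₀).card ≤ 2 ^ n * n.factorial := by
  classical
  set Φ : (Fin n × Bool ≃ Fin (2*n)) → (Fin n ↪ Fin n) × (Fin n → Bool) := fun σ =>
    (if h : Function.Injective (fun i : Fin n => (σ₀.symm (σ (i, false))).1) then ⟨_, h⟩
      else Function.Embedding.refl _,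
     fun i => (σ₀.symm (σ (i, false))).2) with hΦ
  have hinj : Set.InjOn Φ
      ((Finset.univ : Finset (Fin n × Bool ≃ Fin (2*n))).filter
        fun σ => cliqueM n σ = cliqueM n σ₀) := by
    intro σ hσ σ' hσ' hee
    simp only [Finset.coe_filter, Set.mem_setOf_eq, Finset.mem_univ, true_and] at hσ hσ'
    have h1 := congrArg Prod.fst hee
    have h2 := congrArg Prod.snd hee
    simp only [hΦ, dif_pos (inj1 hσ), dif_pos (inj1 hσ')] at h1
    have h1' : ∀ i : Fin n, (σ₀.symm (σ (i, false))).1 = (σ₀.symm (σ' (i, false))).1 :=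
      fun i => congrFun (congrArg (fun E : Fin n ↪ Fin n => (E : Fin n → Fin n)) h1) i
    have h2' : ∀ i : Fin n, (σ₀.symm (σ (i, false))).2 = (σ₀.symm (σ' (i, false))).2 :=
      fun i => congrFun h2 i
    exact recon hσ hσ' fun i => Prod.ext (h1' i) (h2' i)
  calc ((Finset.univ : Finset (Fin n × Bool ≃ Fin (2*n))).filter
      fun σ => cliqueM n σ = cliqueM n σ₀).card
      ≤ (Finset.univ : Finset ((Fin n ↪ Fin n) × (Fin n → Bool))).card :=
        Finset.card_le_card_of_injOn Φ (fun _ _ => Finset.mem_univ _) hinj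
    _ ≤ 2 ^ n * n.factorial := by
        rw [Finset.card_univ]
        simp [Fintype.card_embedding_eq, Nat.descFactorial_self, mul_comm]

lemma count (n : ℕ) :
    (2 * n).factorial ≤ 2 ^ n * n.factorial *
      ((Finset.univ : Finset (Fin n × Bool ≃ Fin (2*n))).image (cliqueM n)).card := by
  classical
  have e : Fin n × Bool ≃ Fin (2*n) := Fintype.equivFinOfCardEq (by simp [mul_comm])
  have hcard : (Finset.univ : Finset (Fin n × Bool ≃ Fin (2*n))).card = (2*n).factorial := by
    rw [Finset.card_univ, Fintype.card_equiv e]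
    simp [mul_comm]
  rw [← hcard]
  refine Finset.card_le_mul_card_image _ _ (fun b hb => ?_)
  obtain ⟨σ₀, -, rfl⟩ := Finset.mem_image.mp hb
  exact fiber_card σ₀

end Stmt19

theorem stmt19 (n : ℕ) (hn : 2 ≤ n) :
    IsMaximalMatchingF (pendGraph n)
        (Finset.univ.image fun a : Fin (2 * n) => s(Sum.inl a, Sum.inr a)) ∧
      (Finset.univ.image fun a : Fin (2 * n) => s(Sum.inl a, Sum.inr a)).card = 2 * n ∧
      (∀ M : Finset (Sym2 (Fin (2 * n) ⊕ Fin (2 * n))),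
        IsMaximalMatchingF (pendGraph n) M → M.card = 2 * n →
          M = Finset.univ.image fun a : Fin (2 * n) => s(Sum.inl a, Sum.inr a)) ∧
      (2 * n).factorial / (2 ^ n * n.factorial) ≤
        {M : Finset (Sym2 (Fin (2 * n) ⊕ Fin (2 * n))) |
          IsMaximalMatchingF (pendGraph n) M}.ncard := by
  classical
  refine ⟨Stmt19.pendM_maximal n, Stmt19.pendM_card n, Stmt19.uniq n, ?_⟩
  have h1 := Stmt19.count n
  set T := (Finset.univ : Finset (Fin n × Bool ≃ Fin (2*n))).image (Stmt19.cliqueM n) with hT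
  have h2 : T.card ≤ {M : Finset (Sym2 (Fin (2 * n) ⊕ Fin (2 * n))) |
      IsMaximalMatchingF (pendGraph n) M}.ncard := by
    rw [← Set.ncard_coe_finset]
    refine Set.ncard_le_ncard ?_ (Set.toFinite _)
    intro M hM
    simp only [hT, Finset.coe_image, Finset.coe_univ, Set.image_univ, Set.mem_range] at hM
    obtain ⟨σ, rfl⟩ := hM
    exact Stmt19.cliqueM_maximal σ
  have hpos : 0 < 2 ^ n * n.factorial :=
    Nat.mul_pos (Nat.pow_pos (by norm_num)) n.factorial_pos
  calc (2 * n).factorial / (2 ^ n * n.factorial)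
      ≤ (2 ^ n * n.factorial * T.card) / (2 ^ n * n.factorial) := Nat.div_le_div_right h1
    _ = T.card := Nat.mul_div_cancel_left _ hpos
    _ ≤ _ := h2
end
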